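/- In the series composition of m clause gadgets (Construction 2) for a 3-SAT formula with n variables, where for each variable all its incoming edges (one per gadget) form one group and all its outgoing edges form another group, and any valid cut must assign a common cut value to all edges in a group while destroying every source-to-target path that avoids all intermediate nodes: any valid set of cut edge-groups has cardinality at least n·m edges, i.e., at least one of the two groups per variable must be fully cut. -/
import Mathlib


/-- Vertices of the series composition of `m` clause gadgets over `n` variables:
chain nodes `s 0, …, s m`, variable nodes `v i j` (variable `i` in gadget `j`),
and intermediate nodes `iT j`, `iF j` for each gadget `j`. -/
inductive CV (n m : ℕ) : Type
  | s : Fin (m + 1) → CV n m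
  | v : Fin n → Fin m → CV n m
  | iT : Fin m → CV n m
  | iF : Fin m → CV n m
  deriving DecidableEq

/-- Edges of the composed graph for the 3-SAT formula with clauses `c`:
through edges `(s_{j}, v i j)` and `(v i j, s_{j+1})` for every variable `i` and
gadget `j`; for each positive literal `x_i` of clause `c j`, edges `(v i j, iT j)`
and `(iT j, s_{j+1})`; for each negative literal `¬x_i` of `c j`, edges
`(s_j, iF j)` and `(iF j, v i j)`. -/
def compEdge {n m : ℕ} (c : Fin m → Finset (Fin n × Bool)) :
    CV n m → CV n m → Prop
  | .s j, .v _ j' => j = Fin.castSucc j'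
  | .v _ j, .s j' => j' = Fin.succ j
  | .v i j, .iT j' => j' = j ∧ (i, true) ∈ c j
  | .iT j, .s j' => j' = Fin.succ j ∧ ∃ i, (i, true) ∈ c j
  | .s j, .iF j' => j = Fin.castSucc j' ∧ ∃ i, (i, false) ∈ c j'
  | .iF j, .v i j' => j' = j ∧ (i, false) ∈ c j
  | _, _ => False

/-- A path from the source `s 0` to the target `s m` in the composed graph with
the cut edges `C` removed. -/
def IsCutPath {n m : ℕ} (c : Fin m → Finset (Fin n × Bool))
    (C : Finset (CV n m × CV n m)) (k : ℕ) (p : ℕ → CV n m) : Prop :=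
  p 0 = CV.s 0 ∧ p k = CV.s (Fin.last m) ∧
    ∀ i < k, compEdge c (p i) (p (i + 1)) ∧ (p i, p (i + 1)) ∉ C

/-- A path avoids all intermediate nodes. -/
def AvoidsI {n m : ℕ} (k : ℕ) (p : ℕ → CV n m) : Prop :=
  ∀ i ≤ k, (∀ j, p i ≠ CV.iT j) ∧ ∀ j, p i ≠ CV.iF j

/-- A path visits some intermediate node. -/
def VisitsI {n m : ℕ} (k : ℕ) (p : ℕ → CV n m) : Prop :=
  ∃ i ≤ k, ∃ j, p i = CV.iT j ∨ p i = CV.iF j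

/-- The cut set respects the edge groups: for each variable `i`, all its incoming
edges `(s_j, v i j)` share one cut value, and all its outgoing edges
`(v i j, s_{j+1})` share one cut value. -/
def GroupsRespected {n m : ℕ} (C : Finset (CV n m × CV n m)) : Prop :=
  (∀ i : Fin n, ∀ j j' : Fin m,
    ((CV.s (Fin.castSucc j), CV.v i j) ∈ C ↔ (CV.s (Fin.castSucc j'), CV.v i j') ∈ C)) ∧
  (∀ i : Fin n, ∀ j j' : Fin m,
    ((CV.v i j, CV.s (Fin.succ j)) ∈ C ↔ (CV.v i j', CV.s (Fin.succ j')) ∈ C))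

/-- Only the grouped through edges (not the edges incident to intermediates) may be cut. -/
def OnlyThrough {n m : ℕ} (C : Finset (CV n m × CV n m)) : Prop :=
  ∀ e ∈ C, (∃ i j, e = (CV.s (Fin.castSucc j), CV.v i j)) ∨
    (∃ i j, e = (CV.v i j, CV.s (Fin.succ j)))

/-- All bypass paths (source-to-target paths avoiding every intermediate node)
are destroyed by the cuts. -/
def NoBypass {n m : ℕ} (c : Fin m → Finset (Fin n × Bool))
    (C : Finset (CV n m × CV n m)) : Prop :=
  ¬ ∃ (k : ℕ) (p : ℕ → CV n m), IsCutPath c C k p ∧ AvoidsI k p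

/-- The bypass path through variable `i`: alternates `s j`, `v i j`. -/
def byp {n : ℕ} (m : ℕ) (i : Fin n) (t : ℕ) : CV n m :=
  if h : t / 2 < m then
    if t % 2 = 0 then .s (Fin.castSucc ⟨t / 2, h⟩) else .v i ⟨t / 2, h⟩
  else .s (Fin.last m)

lemma bypass_contra {n m : ℕ} (c : Fin m → Finset (Fin n × Bool))
    (C : Finset (CV n m × CV n m)) (hbyp : NoBypass c C) (i : Fin n)
    (hin : ∀ j, (CV.s (Fin.castSucc j), CV.v i j) ∉ C)
    (hout : ∀ j, (CV.v i j, CV.s (Fin.succ j)) ∉ C) : False := by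
  apply hbyp
  refine ⟨2 * m, byp m i, ⟨?_, ?_, ?_⟩, ?_⟩
  · unfold byp
    split_ifs with h h2
    · exact congrArg CV.s (Fin.ext (by simp))
    · omega
    · have : m = 0 := by omega
      subst this; rfl
  · unfold byp
    have h : ¬ (2 * m / 2 < m) := by omega
    rw [dif_neg h]
  · intro t ht
    rcases Nat.even_or_odd t with ⟨q, hq⟩ | ⟨q, hq⟩
    · have hqm : q < m := by omega
      have e1 : byp m i t = .s (Fin.castSucc ⟨q, hqm⟩) := by
        unfold byp
        have h1 : t / 2 = q := by omega
        have h2 : t % 2 = 0 := by omega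
        simp only [h1, h2, dif_pos hqm]
        norm_num
      have e2 : byp m i (t + 1) = .v i ⟨q, hqm⟩ := by
        unfold byp
        have h1 : (t + 1) / 2 = q := by omega
        have h2 : (t + 1) % 2 = 1 := by omega
        simp only [h1, h2, dif_pos hqm]
        norm_num
      rw [e1, e2]
      exact ⟨by simp [compEdge], hin ⟨q, hqm⟩⟩
    · have hqm : q < m := by omega
      have e1 : byp m i t = .v i ⟨q, hqm⟩ := by
        unfold byp
        have h1 : t / 2 = q := by omega
        have h2 : t % 2 = 1 := by omega
        simp only [h1, h2, dif_pos hqm]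
        norm_num
      have e2 : byp m i (t + 1) = .s (Fin.succ ⟨q, hqm⟩) := by
        unfold byp
        have h1 : (t + 1) / 2 = q + 1 := by omega
        have h2 : (t + 1) % 2 = 0 := by omega
        simp only [h1, h2]
        split_ifs with h
        · exact congrArg CV.s (Fin.ext rfl)
        · have : q + 1 = m := by omega
          exact congrArg CV.s (Fin.ext (by simp [Fin.last, this]))
      rw [e1, e2]
      exact ⟨by simp [compEdge], hout ⟨q, hqm⟩⟩
  · intro t _
    unfold byp
    split_ifs <;> simp

/-- lower bound: any valid cut set (respecting the groups, cutting
only grouped through edges, and destroying every bypass path) has cardinality at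
least `n·m`; indeed for each variable at least one of its two groups must be
fully cut. -/
theorem stmt_9 (n m : ℕ) (c : Fin m → Finset (Fin n × Bool))
    (C : Finset (CV n m × CV n m))
    (hgrp : GroupsRespected C) (hthr : OnlyThrough C) (hbyp : NoBypass c C) :
    n * m ≤ C.card ∧
    ∀ i : Fin n, (∀ j : Fin m, (CV.s (Fin.castSucc j), CV.v i j) ∈ C) ∨
      (∀ j : Fin m, (CV.v i j, CV.s (Fin.succ j)) ∈ C) := by
  classical
  have H : ∀ i : Fin n, (∀ j : Fin m, (CV.s (Fin.castSucc j), CV.v i j) ∈ C) ∨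
      (∀ j : Fin m, (CV.v i j, CV.s (Fin.succ j)) ∈ C) := by
    intro i
    by_cases hI : ∀ j : Fin m, (CV.s (Fin.castSucc j), CV.v i j) ∈ C
    · exact Or.inl hI
    · right
      push_neg at hI
      obtain ⟨j0, hj0⟩ := hI
      intro j
      by_contra hj
      exact bypass_contra c C hbyp i
        (fun j' => fun h => hj0 ((hgrp.1 i j' j0).mp h))
        (fun j' => fun h => hj ((hgrp.2 i j' j).mp h))
  refine ⟨?_, H⟩
  set F : Fin n × Fin m → CV n m × CV n m := fun p =>
    if (∀ j : Fin m, (CV.s (Fin.castSucc j), CV.v p.1 j) ∈ C)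
    then (CV.s (Fin.castSucc p.2), CV.v p.1 p.2)
    else (CV.v p.1 p.2, CV.s (Fin.succ p.2)) with hF
  have hmem : ∀ p : Fin n × Fin m, F p ∈ C := by
    intro p
    by_cases h : ∀ j : Fin m, (CV.s (Fin.castSucc j), CV.v p.1 j) ∈ C
    · simpa [hF, h] using h p.2
    · rcases H p.1 with h' | h'
      · exact absurd h' h
      · simpa [hF, h] using h' p.2
  have hinj : Function.Injective F := by
    intro a b hab
    simp only [hF] at hab
    by_cases ha : ∀ j : Fin m, (CV.s (Fin.castSucc j), CV.v a.1 j) ∈ C <;>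
      by_cases hb : ∀ j : Fin m, (CV.s (Fin.castSucc j), CV.v b.1 j) ∈ C
    · rw [if_pos ha, if_pos hb] at hab
      obtain ⟨h1, h2⟩ := Prod.mk.injEq .. ▸ hab
      obtain ⟨e1, e2⟩ := CV.v.injEq .. ▸ h2
      exact Prod.ext e1 e2
    · rw [if_pos ha, if_neg hb] at hab
      exact absurd (congrArg Prod.fst hab) (by simp)
    · rw [if_neg ha, if_pos hb] at hab
      exact absurd (congrArg Prod.fst hab) (by simp)
    · rw [if_neg ha, if_neg hb] at hab
      obtain ⟨h1, h2⟩ := Prod.mk.injEq .. ▸ hab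
      obtain ⟨e1, e2⟩ := CV.v.injEq .. ▸ h1
      exact Prod.ext e1 e2
  calc n * m = (Finset.univ.image F).card := by
        rw [Finset.card_image_of_injective _ hinj, Finset.card_univ,
          Fintype.card_prod, Fintype.card_fin, Fintype.card_fin]
    _ ≤ C.card := Finset.card_le_card (by
        intro e he
        simp only [Finset.mem_image] at he
        obtain ⟨p, _, rfl⟩ := he
        exact hmem p)
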